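/- Let G̃ = (V, Ẽ) be a graph containing G as a subgraph (E ⊆ Ẽ), with maximal cliques Ṽ_1,…,Ṽ_{p̃}. Then for every integer t ≥ 1 one has ξ_t ≤ ξ̃^isp_t ≤ ξ^isp_t, where ξ̃^isp_t is the intermediate ideal-sparse bound built from the cliques of G̃. -/

import Mathlib

open MvPolynomial

/-- Substituting `0` for the variables outside `U` (the restriction `f ↦ f|U`). -/
noncomputable def restrictVars {n : ℕ} (U : Finset (Fin n)) :
    MvPolynomial (Fin n) ℝ →ₐ[ℝ] MvPolynomial (Fin n) ℝ :=
  aeval (fun i => if i ∈ U then (X i : MvPolynomial (Fin n) ℝ) else 0)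

/-- Membership in the truncated quadratic module `M(g)_{2t}` generated by `g₀ = 1, g₁, …, gₘ`. -/
def inTruncModule {n m : ℕ} (g : Fin m → MvPolynomial (Fin n) ℝ) (t : ℕ)
    (q : MvPolynomial (Fin n) ℝ) : Prop :=
  ∃ σ : Fin (m + 1) → MvPolynomial (Fin n) ℝ,
    (∀ j, IsSumSq (σ j)) ∧
    (∀ j, (σ j * (Fin.cons 1 g : Fin (m + 1) → MvPolynomial (Fin n) ℝ) j).totalDegree ≤ 2 * t) ∧
    q = ∑ j, σ j * (Fin.cons 1 g : Fin (m + 1) → MvPolynomial (Fin n) ℝ) j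

/-- Membership in the truncated quadratic module `M(g|U)_{2t}`, with sums of squares of
polynomials in the variables `x(U)`. -/
def inTruncModuleRes {n m : ℕ} (U : Finset (Fin n))
    (g : Fin m → MvPolynomial (Fin n) ℝ) (t : ℕ) (q : MvPolynomial (Fin n) ℝ) : Prop :=
  ∃ σ : Fin (m + 1) → MvPolynomial (Fin n) ℝ,
    (∀ j, IsSumSq (σ j) ∧ restrictVars U (σ j) = σ j) ∧
    (∀ j, (σ j * restrictVars U ((Fin.cons 1 g : Fin (m + 1) → MvPolynomial (Fin n) ℝ) j)).totalDegree ≤ 2 * t) ∧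
    q = ∑ j, σ j * restrictVars U ((Fin.cons 1 g : Fin (m + 1) → MvPolynomial (Fin n) ℝ) j)

lemma restrictVars_X {n : ℕ} (U : Finset (Fin n)) (i : Fin n) :
    restrictVars U (X i) = if i ∈ U then X i else 0 :=
  aeval_X _ _

lemma restrictVars_comp {n : ℕ} {Vs U : Finset (Fin n)} (h : Vs ⊆ U)
    (p : MvPolynomial (Fin n) ℝ) :
    restrictVars Vs (restrictVars U p) = restrictVars Vs p := by
  have key : (restrictVars Vs).comp (restrictVars U) = restrictVars Vs := by
    apply MvPolynomial.algHom_ext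
    intro i
    simp only [AlgHom.comp_apply, restrictVars_X]
    by_cases hi : i ∈ U
    · rw [if_pos hi, restrictVars_X]
    · rw [if_neg hi, map_zero, if_neg (fun hv => hi (h hv))]
  exact DFunLike.congr_fun key p

lemma restrictVars_monomial {n : ℕ} (U : Finset (Fin n)) (α : Fin n →₀ ℕ) (c : ℝ) :
    restrictVars U (monomial α c) = if α.support ⊆ U then monomial α c else 0 := by
  classical
  rw [monomial_eq, Finsupp.prod, map_mul, map_prod]
  have hC : restrictVars U (C c) = C c := by
    simp [restrictVars, algHom_C]
  rw [hC]
  by_cases hs : α.support ⊆ U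
  · rw [if_pos hs]
    congr 1
    apply Finset.prod_congr rfl
    intro i hi
    rw [map_pow, restrictVars_X, if_pos (hs hi)]
  · rw [if_neg hs]
    obtain ⟨i, hi, hiU⟩ := Finset.not_subset.mp hs
    have hz : restrictVars U (X i ^ α i) = 0 := by
      rw [map_pow, restrictVars_X, if_neg hiU, zero_pow]
      simpa using Finsupp.mem_support_iff.mp hi
    rw [Finset.prod_eq_zero hi hz, mul_zero]

lemma coeff_restrictVars {n : ℕ} (U : Finset (Fin n)) (p : MvPolynomial (Fin n) ℝ)
    (α : Fin n →₀ ℕ) :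
    coeff α (restrictVars U p) = if α.support ⊆ U then coeff α p else 0 := by
  classical
  conv_lhs => rw [← support_sum_monomial_coeff p]
  rw [map_sum, coeff_sum]
  have step : ∀ β ∈ p.support,
      coeff α (restrictVars U (monomial β (coeff β p)))
        = if β = α then (if α.support ⊆ U then coeff α p else 0) else 0 := by
    intro β _
    rw [restrictVars_monomial]
    by_cases hb : β = α
    · subst hb
      by_cases hs : β.support ⊆ U <;> simp [hs, coeff_monomial]
    · by_cases hs : β.support ⊆ U <;> simp [hs, coeff_monomial, hb]
  rw [Finset.sum_congr rfl step, Finset.sum_ite_eq' p.support α]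
  by_cases hmem : α ∈ p.support
  · simp [hmem]
  · have h0 : coeff α p = 0 := notMem_support_iff.mp hmem
    simp [hmem, h0]

lemma support_restrictVars_subset {n : ℕ} (U : Finset (Fin n)) (p : MvPolynomial (Fin n) ℝ) :
    (restrictVars U p).support ⊆ p.support := by
  intro α hα
  rw [mem_support_iff, coeff_restrictVars] at hα
  rw [mem_support_iff]
  intro h
  apply hα
  split <;> simp [h]

lemma mem_support_restrictVars {n : ℕ} {U : Finset (Fin n)} {p : MvPolynomial (Fin n) ℝ}
    {α : Fin n →₀ ℕ} (hα : α ∈ (restrictVars U p).support) : α.support ⊆ U := by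
  by_contra h
  rw [mem_support_iff, coeff_restrictVars, if_neg h] at hα
  exact hα rfl

lemma totalDegree_restrictVars_le {n : ℕ} (U : Finset (Fin n)) (p : MvPolynomial (Fin n) ℝ) :
    (restrictVars U p).totalDegree ≤ p.totalDegree :=
  Finset.sup_mono (support_restrictVars_subset U p)

lemma IsSumSq.map_algHom {n : ℕ} (f : MvPolynomial (Fin n) ℝ →ₐ[ℝ] MvPolynomial (Fin n) ℝ)
    {S : MvPolynomial (Fin n) ℝ} (h : IsSumSq S) : IsSumSq (f S) := by
  induction h with
  | zero => rw [map_zero]; exact IsSumSq.zero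
  | sq_add a pS ih => rw [map_add, map_mul]; exact IsSumSq.sq_add _ ih

lemma inTruncModuleRes_restrict {n m : ℕ} (U : Finset (Fin n))
    {g : Fin m → MvPolynomial (Fin n) ℝ} {t : ℕ} {q : MvPolynomial (Fin n) ℝ}
    (h : inTruncModule g t q) : inTruncModuleRes U g t (restrictVars U q) := by
  obtain ⟨σ, hsos, hdeg, hq⟩ := h
  refine ⟨fun j => restrictVars U (σ j), fun j => ⟨IsSumSq.map_algHom _ (hsos j),
    restrictVars_comp (subset_refl U) _⟩, fun j => ?_, ?_⟩
  · rw [← map_mul]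
    exact (totalDegree_restrictVars_le U _).trans (hdeg j)
  · rw [hq, map_sum]
    exact Finset.sum_congr rfl fun j _ => map_mul _ _ _

lemma inTruncModuleRes_restrict_sub {n m : ℕ} {Vk U : Finset (Fin n)} (hsub : Vk ⊆ U)
    {g : Fin m → MvPolynomial (Fin n) ℝ} {t : ℕ} {q : MvPolynomial (Fin n) ℝ}
    (h : inTruncModuleRes U g t q) : inTruncModuleRes Vk g t (restrictVars Vk q) := by
  obtain ⟨σ, hsos, hdeg, hq⟩ := h
  refine ⟨fun j => restrictVars Vk (σ j), fun j => ⟨IsSumSq.map_algHom _ (hsos j).1,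
    restrictVars_comp (subset_refl Vk) _⟩, fun j => ?_, ?_⟩
  · rw [← restrictVars_comp hsub ((Fin.cons 1 g : Fin (m + 1) → MvPolynomial (Fin n) ℝ) j),
      ← map_mul]
    exact (totalDegree_restrictVars_le Vk _).trans (hdeg j)
  · rw [hq, map_sum]
    refine Finset.sum_congr rfl fun j _ => ?_
    rw [map_mul, restrictVars_comp hsub]

lemma exists_maximal_clique_extension {n : ℕ} (Gt : SimpleGraph (Fin n)) (S0 : Finset (Fin n))
    (hS0 : Gt.IsClique (S0 : Set (Fin n))) :
    ∃ S : Finset (Fin n), S0 ⊆ S ∧ Gt.IsClique (S : Set (Fin n)) ∧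
      ∀ S' : Finset (Fin n), Gt.IsClique (S' : Set (Fin n)) → S ⊆ S' → S' = S := by
  classical
  let T : Finset (Finset (Fin n)) :=
    Finset.univ.filter fun S => Gt.IsClique (S : Set (Fin n)) ∧ S0 ⊆ S
  have hT : S0 ∈ T := by simp [T, hS0]
  obtain ⟨S, hS, hSmax⟩ := Finset.exists_max_image T Finset.card ⟨S0, hT⟩
  rw [Finset.mem_filter] at hS
  refine ⟨S, hS.2.2, hS.2.1, fun S' hclq hsub => ?_⟩
  have hS' : S' ∈ T := by
    simp only [T, Finset.mem_filter, Finset.mem_univ, true_and]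
    exact ⟨hclq, hS.2.2.trans hsub⟩
  exact (Finset.eq_of_subset_of_card_le hsub (hSmax S' hS')).symm

lemma L_restrict_ideal_zero {n : ℕ} (U : Finset (Fin n)) (L : MvPolynomial (Fin n) ℝ →ₗ[ℝ] ℝ)
    (D : ℕ) (i j : Fin n)
    (hzero : i ∈ U → j ∈ U → ∀ α : Fin n →₀ ℕ, (∑ i', α i') ≤ D →
      (∀ i', α i' ≠ 0 → i' ∈ U) → L (X i * X j * monomial α 1) = 0)
    (u : MvPolynomial (Fin n) ℝ) (hu : u.totalDegree ≤ D) :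
    L (restrictVars U (u * X i * X j)) = 0 := by
  have hsplit : restrictVars U (u * X i * X j)
      = restrictVars U u * (if i ∈ U then X i else 0) * (if j ∈ U then X j else 0) := by
    rw [map_mul, map_mul, restrictVars_X, restrictVars_X]
  rw [hsplit]
  by_cases hi : i ∈ U
  · by_cases hj : j ∈ U
    · rw [if_pos hi, if_pos hj]
      set w := restrictVars U u with hwdef
      have hw : w * X i * X j
          = ∑ α ∈ w.support, (coeff α w) • (X i * X j * monomial α 1) := by
        conv_lhs => rw [← support_sum_monomial_coeff w]
        rw [Finset.sum_mul, Finset.sum_mul]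
        refine Finset.sum_congr rfl fun α _ => ?_
        rw [smul_eq_C_mul]
        have hm : monomial α (coeff α w) = C (coeff α w) * monomial α 1 := by
          rw [C_mul_monomial, mul_one]
        rw [hm]; ring
      rw [hw, map_sum]
      refine Finset.sum_eq_zero fun α hα => ?_
      rw [map_smul]
      have hsum : (∑ i', α i') = α.sum fun _ e => e :=
        (Finsupp.sum_fintype α (fun _ e => e) (fun _ => rfl)).symm
      have hd : (∑ i', α i') ≤ D := by
        rw [hsum]
        exact (le_totalDegree hα).trans ((totalDegree_restrictVars_le U u).trans hu)
      have hsupp : ∀ i', α i' ≠ 0 → i' ∈ U := fun i' hi' =>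
        mem_support_restrictVars hα (Finsupp.mem_support_iff.mpr hi')
      rw [hzero hi hj α hd hsupp, smul_zero]
    · rw [if_neg hj, mul_zero, map_zero]
  · rw [if_neg hi, mul_zero, zero_mul, map_zero]

/-- Let `G̃` contain `G` as a subgraph, with maximal cliques `Ṽ 1, …, Ṽ p̃`.
Then for every `t ≥ 1` one has `ξ_t ≤ ξ̃^isp_t ≤ ξ^isp_t`, where `ξ̃^isp_t` is the
intermediate ideal-sparse bound built from the cliques of `G̃` (it keeps the ideal
constraints `L̃ₕ(xᵢxⱼx^α) = 0` for nonedges `{i,j}` of `G` inside `Ṽ h`). -/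
theorem dense_le_intermediate_le_ideal_sparse
    (n m N p pt t : ℕ) (ht : 1 ≤ t) (G Gt : SimpleGraph (Fin n)) (hGGt : G ≤ Gt)
    (g : Fin m → MvPolynomial (Fin n) ℝ)
    (f0 : MvPolynomial (Fin n) ℝ) (f : Fin N → MvPolynomial (Fin n) ℝ) (a : Fin N → ℝ)
    (V : Fin p → Finset (Fin n))
    (hmax : ∀ k, G.IsClique (V k : Set (Fin n)) ∧
      ∀ S : Finset (Fin n), G.IsClique (S : Set (Fin n)) → V k ⊆ S → S = V k)
    (hall : ∀ S : Finset (Fin n),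
      (G.IsClique (S : Set (Fin n)) ∧
        ∀ S' : Finset (Fin n), G.IsClique (S' : Set (Fin n)) → S ⊆ S' → S' = S) →
      ∃ k, V k = S)
    (Vt : Fin pt → Finset (Fin n))
    (hmaxt : ∀ h, Gt.IsClique (Vt h : Set (Fin n)) ∧
      ∀ S : Finset (Fin n), Gt.IsClique (S : Set (Fin n)) → Vt h ⊆ S → S = Vt h)
    (hallt : ∀ S : Finset (Fin n),
      (Gt.IsClique (S : Set (Fin n)) ∧
        ∀ S' : Finset (Fin n), Gt.IsClique (S' : Set (Fin n)) → S ⊆ S' → S' = S) →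
      ∃ h, Vt h = S)
    (xit xtisp xisp : EReal)
    (hxit : xit = sInf {v : EReal | ∃ L : MvPolynomial (Fin n) ℝ →ₗ[ℝ] ℝ,
      (∀ i, L (f i) = a i) ∧
      (∀ q, inTruncModule g t q → 0 ≤ L q) ∧
      (∀ i j : Fin n, i ≠ j → ¬ G.Adj i j →
        ∀ u : MvPolynomial (Fin n) ℝ, u.totalDegree ≤ 2 * t - 2 → L (u * X i * X j) = 0) ∧
      v = ((L f0 : ℝ) : EReal)})
    (hxtisp : xtisp = sInf {v : EReal | ∃ L : Fin pt → (MvPolynomial (Fin n) ℝ →ₗ[ℝ] ℝ),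
      (∀ i, ∑ h, L h (restrictVars (Vt h) (f i)) = a i) ∧
      (∀ h q, inTruncModuleRes (Vt h) g t q → 0 ≤ L h q) ∧
      (∀ h : Fin pt, ∀ α : Fin n →₀ ℕ, (∑ i, α i) ≤ 2 * t - 2 →
        (∀ i, α i ≠ 0 → i ∈ Vt h) →
        ∀ i ∈ Vt h, ∀ j ∈ Vt h, i ≠ j → ¬ G.Adj i j →
          L h (X i * X j * monomial α 1) = 0) ∧
      v = ((∑ h, L h (restrictVars (Vt h) f0) : ℝ) : EReal)})
    (hxisp : xisp = sInf {v : EReal | ∃ L : Fin p → (MvPolynomial (Fin n) ℝ →ₗ[ℝ] ℝ),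
      (∀ i, ∑ k, L k (restrictVars (V k) (f i)) = a i) ∧
      (∀ k q, inTruncModuleRes (V k) g t q → 0 ≤ L k q) ∧
      v = ((∑ k, L k (restrictVars (V k) f0) : ℝ) : EReal)}) :
    xit ≤ xtisp ∧ xtisp ≤ xisp := by
  classical
  constructor
  · -- xit ≤ xtisp : every feasible solution of xtisp gives one for xit
    rw [hxit, hxtisp]
    apply sInf_le_sInf
    rintro v ⟨L, hLa, hLpos, hLideal, rfl⟩
    refine ⟨∑ h, (L h).comp (restrictVars (Vt h)).toLinearMap, ?_, ?_, ?_, ?_⟩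
    · intro i
      simpa using hLa i
    · intro q hq
      rw [LinearMap.sum_apply]
      refine Finset.sum_nonneg fun h _ => ?_
      exact hLpos h _ (inTruncModuleRes_restrict (Vt h) hq)
    · intro i j hij hadj u hu
      rw [LinearMap.sum_apply]
      refine Finset.sum_eq_zero fun h _ => ?_
      exact L_restrict_ideal_zero (Vt h) (L h) (2 * t - 2) i j
        (fun hi hj α hα hs => hLideal h α hα hs i hi j hj hij hadj) u hu
    · simp
  · -- xtisp ≤ xisp
    rw [hxtisp, hxisp]
    apply sInf_le_sInf
    rintro v ⟨L, hLa, hLpos, rfl⟩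
    have hchoice : ∀ k, ∃ h, V k ⊆ Vt h := by
      intro k
      obtain ⟨S, hsub, hclq, hmx⟩ :=
        exists_maximal_clique_extension Gt (V k) ((hmax k).1.mono hGGt)
      obtain ⟨h, rfl⟩ := hallt S ⟨hclq, fun S' h1 h2 => hmx S' h1 h2⟩
      exact ⟨h, hsub⟩
    choose hk hhk using hchoice
    set Lt : Fin pt → (MvPolynomial (Fin n) ℝ →ₗ[ℝ] ℝ) := fun h =>
      ∑ k ∈ Finset.univ.filter (fun k => hk k = h),
        (L k).comp (restrictVars (V k)).toLinearMap with hLt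
    have key : ∀ q : MvPolynomial (Fin n) ℝ,
        ∑ h, Lt h (restrictVars (Vt h) q) = ∑ k, L k (restrictVars (V k) q) := by
      intro q
      have step : ∀ h, Lt h (restrictVars (Vt h) q)
          = ∑ k ∈ Finset.univ.filter (fun k => hk k = h), L k (restrictVars (V k) q) := by
        intro h
        rw [hLt]
        simp only [LinearMap.sum_apply, LinearMap.comp_apply, AlgHom.toLinearMap_apply]
        refine Finset.sum_congr rfl fun k hkmem => ?_
        have hkh : hk k = h := (Finset.mem_filter.mp hkmem).2
        rw [restrictVars_comp (hkh ▸ hhk k)]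
      rw [Finset.sum_congr rfl fun h _ => step h]
      exact Finset.sum_fiberwise Finset.univ hk fun k => L k (restrictVars (V k) q)
    refine ⟨Lt, ?_, ?_, ?_, ?_⟩
    · intro i
      rw [key]
      exact hLa i
    · intro h q hq
      rw [hLt]
      simp only [LinearMap.sum_apply, LinearMap.comp_apply, AlgHom.toLinearMap_apply]
      refine Finset.sum_nonneg fun k hkmem => ?_
      have hkh : hk k = h := (Finset.mem_filter.mp hkmem).2
      exact hLpos k _ (inTruncModuleRes_restrict_sub (hkh ▸ hhk k) hq)
    · intro h α hα hs i hi j hj hij hadj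
      rw [hLt]
      simp only [LinearMap.sum_apply, LinearMap.comp_apply, AlgHom.toLinearMap_apply]
      refine Finset.sum_eq_zero fun k _ => ?_
      have hsplit : restrictVars (V k) (X i * X j * monomial α 1)
          = (if i ∈ V k then X i else 0) * (if j ∈ V k then X j else 0)
            * restrictVars (V k) (monomial α 1) := by
        rw [map_mul, map_mul, restrictVars_X, restrictVars_X]
      rw [hsplit]
      by_cases hik : i ∈ V k
      · by_cases hjk : j ∈ V k
        · exact absurd ((hmax k).1 hik hjk hij) hadj
        · simp [hjk]
      · simp [hik]
    · rw [key]
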